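/- Let α = (2^{3/2}/√π) · Σ_{j∈ℤ} (6j+1)·2^{−3j²−j} and β′ = (2^{5/4}/√π) · Σ_{j∈ℤ} (6j+2)·2^{−3j²−2j}. Then α ≠ β′; more precisely, 7·10⁻⁷ < |β′ − α| < 8·10⁻⁷. -/

import Mathlib

open Finset

private lemma nat_key (n a E : ℕ) (ha : a ≤ 6*n+26) (hE : 2*n+40 ≤ E) :
    a * 2^(n+35) ≤ 2^E := by
  have h1 : n < 2^n := Nat.lt_two_pow_self
  have h2 : a ≤ 32 * 2^n := by nlinarith
  calc a * 2^(n+35) ≤ (32 * 2^n) * 2^(n+35) := Nat.mul_le_mul_right _ h2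
    _ = 2^(5+(n+(n+35))) := by rw [show (32:ℕ) = 2^5 from rfl, pow_add, pow_add]; ring
    _ ≤ 2^E := Nat.pow_le_pow_right (by norm_num) (by omega)

private lemma real_key (n a E : ℕ) (ha : a ≤ 6*n+26) (hE : 2*n+40 ≤ E) :
    (a:ℝ) * ((2:ℝ)^E)⁻¹ ≤ ((2:ℝ)^(n+35))⁻¹ := by
  have h1 : (0:ℝ) < 2^E := by positivity
  have h2 : (0:ℝ) < 2^(n+35) := by positivity
  rw [← div_eq_mul_inv, div_le_iff₀ h1, inv_mul_eq_div, le_div_iff₀ h2]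
  exact_mod_cast nat_key n a E ha hE

private lemma absF (n : ℕ) (c e : ℤ) (E : ℕ) (hc : c.natAbs ≤ 6*n+26) (he : e = -(E:ℤ))
    (hE : 2*n+40 ≤ E) :
    |(c:ℝ) * (2:ℝ)^e| ≤ ((2:ℝ)^(n+35))⁻¹ := by
  rw [he, zpow_neg, zpow_natCast, abs_mul, abs_inv, abs_pow]
  have h2 : |(2:ℝ)| = 2 := by norm_num
  have hcc : |(c:ℝ)| = (c.natAbs : ℝ) := by
    rw [Nat.cast_natAbs, Int.cast_abs]
  rw [h2, hcc]
  calc (c.natAbs : ℝ) * ((2:ℝ)^E)⁻¹ ≤ ((6*n+26 : ℕ):ℝ) * ((2:ℝ)^E)⁻¹ := by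
        have : (c.natAbs : ℝ) ≤ ((6*n+26 : ℕ):ℝ) := by exact_mod_cast hc
        have : (0:ℝ) < ((2:ℝ)^E)⁻¹ := by positivity
        nlinarith
    _ ≤ ((2:ℝ)^(n+35))⁻¹ := real_key n (6*n+26) E le_rfl hE

set_option maxHeartbeats 1000000 in
private lemma tail_est (f : ℕ → ℝ) (h : ∀ n, |f n| ≤ ((2:ℝ)^(n+35))⁻¹) :
    Summable f ∧ |∑' n, f n| ≤ ((2:ℝ)^34)⁻¹ := by
  have hfun : (fun n:ℕ => ((2:ℝ)^(n+35))⁻¹) = fun n:ℕ => ((2:ℝ)^35)⁻¹ * ((2:ℝ)⁻¹)^n := by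
    funext n; rw [pow_add, mul_inv, inv_pow]; ring
  have hg : Summable (fun n : ℕ => ((2:ℝ)^(n+35))⁻¹) := by
    rw [hfun]
    exact (summable_geometric_of_lt_one (by norm_num) (by norm_num)).mul_left _
  have habs : Summable (fun n => |f n|) :=
    Summable.of_nonneg_of_le (fun n => abs_nonneg _) h hg
  have hf : Summable f := habs.of_abs
  refine ⟨hf, ?_⟩
  have h3 : |∑' n, f n| ≤ ∑' n, |f n| := by
    have := norm_tsum_le_tsum_norm (f := f) (by simpa using habs)
    simpa using this
  have h4 : ∑' n, |f n| ≤ ∑' n, ((2:ℝ)^(n+35))⁻¹ := Summable.tsum_le_tsum h habs hg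
  have h5 : ∑' n:ℕ, ((2:ℝ)^(n+35))⁻¹ = ((2:ℝ)^34)⁻¹ := by
    rw [hfun, tsum_mul_left, tsum_geometric_of_lt_one (by norm_num) (by norm_num)]
    norm_num
  linarith

set_option maxHeartbeats 1000000 in
theorem stmt_18 :
    let α : ℝ := ((2 : ℝ) ^ ((3 : ℝ) / 2) / Real.sqrt Real.pi) *
      ∑' j : ℤ, ((6 * j + 1 : ℤ) : ℝ) * (2 : ℝ) ^ (-(3 * j ^ 2) - j)
    let β' : ℝ := ((2 : ℝ) ^ ((5 : ℝ) / 4) / Real.sqrt Real.pi) *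
      ∑' j : ℤ, ((6 * j + 2 : ℤ) : ℝ) * (2 : ℝ) ^ (-(3 * j ^ 2) - 2 * j)
    α ≠ β' ∧ 7 / 10 ^ 7 < |β' - α| ∧ |β' - α| < 8 / 10 ^ 7 := by
  intro α β'
  set f1 : ℤ → ℝ := fun j => ((6 * j + 1 : ℤ) : ℝ) * (2 : ℝ) ^ (-(3 * j ^ 2) - j) with hf1
  set f2 : ℤ → ℝ := fun j => ((6 * j + 2 : ℤ) : ℝ) * (2 : ℝ) ^ (-(3 * j ^ 2) - 2 * j) with hf2
  -- tail estimates
  obtain ⟨hs1p, hb1p⟩ := tail_est (fun i => f1 ((i + 4 : ℕ) : ℤ)) (fun n => by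
    exact absF n _ _ (3*n^2+25*n+52) (by push_cast; omega) (by push_cast; ring) (by nlinarith))
  obtain ⟨hs1n, hb1n⟩ := tail_est (fun i => f1 (-(((i + 3 : ℕ) : ℤ) + 1))) (fun n => by
    exact absF n _ _ (3*n^2+23*n+44) (by push_cast; omega) (by push_cast; ring) (by nlinarith))
  obtain ⟨hs2p, hb2p⟩ := tail_est (fun i => f2 ((i + 4 : ℕ) : ℤ)) (fun n => by
    exact absF n _ _ (3*n^2+26*n+56) (by push_cast; omega) (by push_cast; ring) (by nlinarith))
  obtain ⟨hs2n, hb2n⟩ := tail_est (fun i => f2 (-(((i + 3 : ℕ) : ℤ) + 1))) (fun n => by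
    exact absF n _ _ (3*n^2+22*n+40) (by push_cast; omega) (by push_cast; ring) (by nlinarith))
  -- summability of ℕ-parts
  have hS1p : Summable (fun n : ℕ => f1 n) := (summable_nat_add_iff 4).mp hs1p
  have hS1n : Summable (fun n : ℕ => f1 (-(n+1))) := (summable_nat_add_iff 3).mp hs1n
  have hS2p : Summable (fun n : ℕ => f2 n) := (summable_nat_add_iff 4).mp hs2p
  have hS2n : Summable (fun n : ℕ => f2 (-(n+1))) := (summable_nat_add_iff 3).mp hs2n
  -- decompositions
  have hd1 : ∑' j : ℤ, f1 j = (∑ i ∈ range 4, f1 i + ∑' i : ℕ, f1 ((i + 4 : ℕ) : ℤ))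
      + (∑ i ∈ range 3, f1 (-(i+1)) + ∑' i : ℕ, f1 (-(((i + 3 : ℕ) : ℤ) + 1))) := by
    rw [tsum_of_nat_of_neg_add_one hS1p hS1n,
      ← Summable.sum_add_tsum_nat_add 4 hS1p, ← Summable.sum_add_tsum_nat_add 3 hS1n]
  have hd2 : ∑' j : ℤ, f2 j = (∑ i ∈ range 4, f2 i + ∑' i : ℕ, f2 ((i + 4 : ℕ) : ℤ))
      + (∑ i ∈ range 3, f2 (-(i+1)) + ∑' i : ℕ, f2 (-(((i + 3 : ℕ) : ℤ) + 1))) := by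
    rw [tsum_of_nat_of_neg_add_one hS2p hS2n,
      ← Summable.sum_add_tsum_nat_add 4 hS2p, ← Summable.sum_add_tsum_nat_add 3 hS2n]
  -- finite sums
  have hfin1 : (∑ i ∈ range 4, f1 i) + (∑ i ∈ range 3, f1 (-(i+1)))
      = 190643155 / 2^30 := by
    simp only [hf1, Finset.sum_range_succ, Finset.sum_range_zero]
    norm_num
  have hfin2 : (∑ i ∈ range 4, f2 i) + (∑ i ∈ range 3, f2 (-(i+1)))
      = 453427205 / 2^31 := by
    simp only [hf2, Finset.sum_range_succ, Finset.sum_range_zero]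
    norm_num
  -- sum bounds
  have hs1 : |(∑' j : ℤ, f1 j) - 190643155 / 2^30| ≤ ((2:ℝ)^33)⁻¹ := by
    rw [hd1]
    have : ((∑ i ∈ range 4, f1 i + ∑' i : ℕ, f1 ((i + 4 : ℕ) : ℤ))
      + (∑ i ∈ range 3, f1 (-(i+1)) + ∑' i : ℕ, f1 (-(((i + 3 : ℕ) : ℤ) + 1))))
      - 190643155 / 2^30
      = (∑' i : ℕ, f1 ((i + 4 : ℕ) : ℤ)) + (∑' i : ℕ, f1 (-(((i + 3 : ℕ) : ℤ) + 1))) := by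
      rw [← hfin1]; ring
    rw [this]
    calc |_| ≤ _ := abs_add_le _ _
      _ ≤ ((2:ℝ)^34)⁻¹ + ((2:ℝ)^34)⁻¹ := add_le_add hb1p hb1n
      _ ≤ ((2:ℝ)^33)⁻¹ := by norm_num
  have hs2 : |(∑' j : ℤ, f2 j) - 453427205 / 2^31| ≤ ((2:ℝ)^33)⁻¹ := by
    rw [hd2]
    have : ((∑ i ∈ range 4, f2 i + ∑' i : ℕ, f2 ((i + 4 : ℕ) : ℤ))
      + (∑ i ∈ range 3, f2 (-(i+1)) + ∑' i : ℕ, f2 (-(((i + 3 : ℕ) : ℤ) + 1))))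
      - 453427205 / 2^31
      = (∑' i : ℕ, f2 ((i + 4 : ℕ) : ℤ)) + (∑' i : ℕ, f2 (-(((i + 3 : ℕ) : ℤ) + 1))) := by
      rw [← hfin2]; ring
    rw [this]
    calc |_| ≤ _ := abs_add_le _ _
      _ ≤ ((2:ℝ)^34)⁻¹ + ((2:ℝ)^34)⁻¹ := add_le_add hb2p hb2n
      _ ≤ ((2:ℝ)^33)⁻¹ := by norm_num
  -- constant bounds
  set B : ℝ := (2:ℝ) ^ ((3:ℝ)/2) with hB
  set A : ℝ := (2:ℝ) ^ ((5:ℝ)/4) with hA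
  have hBpos : (0:ℝ) < B := Real.rpow_pos_of_pos (by norm_num) _
  have hApos : (0:ℝ) < A := Real.rpow_pos_of_pos (by norm_num) _
  have hBsq : B ^ (2:ℕ) = 8 := by
    rw [hB, ← Real.rpow_natCast ((2:ℝ) ^ ((3:ℝ)/2)) 2, ← Real.rpow_mul (by norm_num)]
    norm_num
  have hA4 : A ^ (4:ℕ) = 32 := by
    rw [hA, ← Real.rpow_natCast ((2:ℝ) ^ ((5:ℝ)/4)) 4, ← Real.rpow_mul (by norm_num)]
    norm_num
  have hBl : (2828427124:ℝ)/10^9 < B := by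
    apply lt_of_pow_lt_pow_left₀ 2 hBpos.le
    rw [hBsq]; norm_num
  have hBu : B < (2828427126:ℝ)/10^9 := by
    apply lt_of_pow_lt_pow_left₀ 2 (by norm_num)
    rw [hBsq]; norm_num
  have hAl : (2378414230:ℝ)/10^9 < A := by
    apply lt_of_pow_lt_pow_left₀ 4 hApos.le
    rw [hA4]; norm_num
  have hAu : A < (2378414231:ℝ)/10^9 := by
    apply lt_of_pow_lt_pow_left₀ 4 (by norm_num)
    rw [hA4]; norm_num
  set p : ℝ := Real.sqrt Real.pi with hp
  have hppos : (0:ℝ) < p := Real.sqrt_pos.mpr Real.pi_pos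
  have hpl : (177:ℝ)/100 < p := by
    rw [hp, Real.lt_sqrt (by norm_num)]
    nlinarith [Real.pi_gt_d6]
  have hpu : p < (178:ℝ)/100 := by
    rw [hp, Real.sqrt_lt' (by norm_num)]
    nlinarith [Real.pi_lt_d2]
  -- put together
  set s1 : ℝ := ∑' j : ℤ, f1 j with hs1d
  set s2 : ℝ := ∑' j : ℤ, f2 j with hs2d
  have hab := abs_le.mp hs1
  have hab2 := abs_le.mp hs2
  have hs1u : s1 ≤ 190643155 / 2^30 + ((2:ℝ)^33)⁻¹ := by linarith [hab.2]
  have hs1l : 190643155 / 2^30 - ((2:ℝ)^33)⁻¹ ≤ s1 := by linarith [hab.1]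
  have hs2u : s2 ≤ 453427205 / 2^31 + ((2:ℝ)^33)⁻¹ := by linarith [hab2.2]
  have hs2l : 453427205 / 2^31 - ((2:ℝ)^33)⁻¹ ≤ s2 := by linarith [hab2.1]
  have hs1pos : (0:ℝ) < s1 := by nlinarith
  have hs2pos : (0:ℝ) < s2 := by nlinarith
  -- bounds on D = B*s1 - A*s2
  have hDu : B * s1 - A * s2 ≤ (2828427126:ℝ)/10^9 * (190643155 / 2^30 + ((2:ℝ)^33)⁻¹)
      - (2378414230:ℝ)/10^9 * (453427205 / 2^31 - ((2:ℝ)^33)⁻¹) := by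
    have h1 : B * s1 ≤ (2828427126:ℝ)/10^9 * (190643155 / 2^30 + ((2:ℝ)^33)⁻¹) :=
      mul_le_mul hBu.le hs1u hs1pos.le (by norm_num)
    have h2 : (2378414230:ℝ)/10^9 * (453427205 / 2^31 - ((2:ℝ)^33)⁻¹) ≤ A * s2 :=
      mul_le_mul hAl.le hs2l (by norm_num) hApos.le
    linarith
  have hDl : (2828427124:ℝ)/10^9 * (190643155 / 2^30 - ((2:ℝ)^33)⁻¹)
      - (2378414231:ℝ)/10^9 * (453427205 / 2^31 + ((2:ℝ)^33)⁻¹) ≤ B * s1 - A * s2 := by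
    have h1 : (2828427124:ℝ)/10^9 * (190643155 / 2^30 - ((2:ℝ)^33)⁻¹) ≤ B * s1 :=
      mul_le_mul hBl.le hs1l (by norm_num) hBpos.le
    have h2 : A * s2 ≤ (2378414231:ℝ)/10^9 * (453427205 / 2^31 + ((2:ℝ)^33)⁻¹) :=
      mul_le_mul hAu.le hs2u hs2pos.le (by norm_num)
    linarith
  have hαβ : α - β' = (B * s1 - A * s2) / p := by
    show B / p * s1 - A / p * s2 = _
    field_simp
  have hkey1 : 7 / 10^7 < α - β' := by
    rw [hαβ, lt_div_iff₀ hppos]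
    have : 7 / 10^7 * p < 7 / 10^7 * ((178:ℝ)/100) := by
      apply mul_lt_mul_of_pos_left hpu; norm_num
    nlinarith
  have hkey2 : α - β' < 8 / 10^7 := by
    rw [hαβ, div_lt_iff₀ hppos]
    have : 8 / 10^7 * ((177:ℝ)/100) < 8 / 10^7 * p := by
      apply mul_lt_mul_of_pos_left hpl; norm_num
    nlinarith
  have habs2 : |β' - α| = α - β' := by
    rw [abs_sub_comm, abs_of_pos]; nlinarith
  refine ⟨?_, ?_, ?_⟩
  · intro h; rw [h] at hkey1; norm_num at hkey1
  · rw [habs2]; exact hkey1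
  · rw [habs2]; exact hkey2
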